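/- The Gaussian free field partition function Z_GFF^{(N)}(x_1,...,x_{2N}) = ∏_{1≤k<l≤2N} (x_l - x_k)^{(1/2)(-1)^{l-k}}, defined for x_1 < x_2 < ... < x_{2N}, satisfies for each i = 1,...,2N the PDE [2∂_{x_i}^2 + ∑_{j≠i} ( (2/(x_j - x_i))∂_{x_j} - 1/(2(x_j - x_i)^2) )] Z_GFF^{(N)} = 0 (the multiple SLE null-field equations with κ = 4, h = 1/4). -/

import Mathlib

open Finset

/-- The Gaussian free field partition function
`Z_GFF^{(N)}(x₁,…,x_{2N}) = ∏_{k<l} (x_l - x_k)^{(1/2)(-1)^{l-k}}`. -/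
noncomputable def Zgff (N : ℕ) (x : Fin (2 * N) → ℝ) : ℝ :=
  ∏ p ∈ Finset.univ.filter (fun p : Fin (2 * N) × Fin (2 * N) => p.1 < p.2),
    (x p.2 - x p.1) ^ ((1 / 2 : ℝ) * (-1 : ℝ) ^ ((p.2 : ℕ) - (p.1 : ℕ)))


/-- symmetric exponent -/
noncomputable def ee {n : ℕ} (j k : Fin n) : ℝ := (1/2 : ℝ) * (-1 : ℝ) ^ ((j:ℕ) + (k:ℕ))

lemma ee_symm {n : ℕ} (j k : Fin n) : ee j k = ee k j := by
  simp [ee, Nat.add_comm]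

lemma ee_sq {n : ℕ} (j k : Fin n) : ee j k * ee j k = 1/4 := by
  simp only [ee]
  rw [mul_mul_mul_comm, ← pow_add]
  rw [Even.neg_one_pow ⟨(j:ℕ)+(k:ℕ), rfl⟩]
  norm_num

lemma ee_mul {n : ℕ} (i j k : Fin n) : ee i j * ee i k = (1/2) * ee j k := by
  simp only [ee]
  rw [mul_mul_mul_comm, ← pow_add]
  have h : (i:ℕ) + j + ((i:ℕ) + k) = ((j:ℕ) + k) + ((i:ℕ) + i) := by ring
  rw [h, pow_add, Even.neg_one_pow ⟨(i:ℕ), rfl⟩]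
  ring

lemma exp_eq {n : ℕ} (k l : Fin n) (h : k < l) :
    ((1:ℝ)/2) * (-1 : ℝ) ^ ((l:ℕ) - (k:ℕ)) = ee k l := by
  have hkl : (k:ℕ) ≤ (l:ℕ) := le_of_lt h
  have h2 : ((l:ℕ) - (k:ℕ)) + ((k:ℕ) + (k:ℕ)) = (k:ℕ) + (l:ℕ) := by omega
  have : (-1 : ℝ) ^ ((k:ℕ) + (l:ℕ)) = (-1:ℝ)^((l:ℕ)-(k:ℕ)) * (-1:ℝ)^((k:ℕ)+(k:ℕ)) := by
    rw [← pow_add, h2]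
  rw [ee, this, Even.neg_one_pow ⟨(k:ℕ), rfl⟩]
  ring

/-- pairs -/
def PP (n : ℕ) : Finset (Fin n × Fin n) := univ.filter (fun p => p.1 < p.2)

lemma mem_PP {n : ℕ} {p : Fin n × Fin n} : p ∈ PP n ↔ p.1 < p.2 := by
  simp [PP]

/-- chamber for coordinate j -/
def UU {n : ℕ} (x : Fin n → ℝ) (j : Fin n) : Set ℝ :=
  ⋂ k : Fin n, {t : ℝ | (k < j → x k < t) ∧ (j < k → t < x k)}

lemma isOpen_UU {n : ℕ} (x : Fin n → ℝ) (j : Fin n) : IsOpen (UU x j) := by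
  apply isOpen_iInter_of_finite
  intro k
  rcases lt_trichotomy k j with h | h | h
  · have : {t : ℝ | (k < j → x k < t) ∧ (j < k → t < x k)} = Set.Ioi (x k) := by
      ext t; simp [h, not_lt.mpr h.le, asymm h]
    rw [this]; exact isOpen_Ioi
  · have : {t : ℝ | (k < j → x k < t) ∧ (j < k → t < x k)} = Set.univ := by
      ext t; simp [h]
    rw [this]; exact isOpen_univ
  · have : {t : ℝ | (k < j → x k < t) ∧ (j < k → t < x k)} = Set.Iio (x k) := by
      ext t; simp [h, asymm h]
    rw [this]; exact isOpen_Iio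

lemma mem_UU {n : ℕ} {x : Fin n → ℝ} {j : Fin n} {t : ℝ} :
    t ∈ UU x j ↔ ∀ k : Fin n, (k < j → x k < t) ∧ (j < k → t < x k) := by
  simp [UU]

lemma mem_UU_self {n : ℕ} {x : Fin n → ℝ} (hx : StrictMono x) (j : Fin n) :
    x j ∈ UU x j := by
  rw [mem_UU]
  exact fun k => ⟨fun h => hx h, fun h => hx h⟩

lemma strictMono_update {n : ℕ} {x : Fin n → ℝ} (hx : StrictMono x) {j : Fin n} {t : ℝ}
    (ht : t ∈ UU x j) : StrictMono (Function.update x j t) := by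
  rw [mem_UU] at ht
  intro a b hab
  rcases eq_or_ne a j with rfl | ha
  · rw [Function.update_self, Function.update_of_ne (ne_of_gt hab)]
    exact (ht b).2 hab
  · rw [Function.update_of_ne ha]
    rcases eq_or_ne b j with rfl | hb
    · rw [Function.update_self]; exact (ht a).1 hab
    · rw [Function.update_of_ne hb]; exact hx hab

/-- log-sum representation -/
noncomputable def gg (N : ℕ) (y : Fin (2*N) → ℝ) : ℝ :=
  ∑ p ∈ PP (2*N), ee p.1 p.2 * Real.log (y p.2 - y p.1)

lemma Zgff_eq_exp (N : ℕ) (y : Fin (2*N) → ℝ) (hy : StrictMono y) :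
    Zgff N y = Real.exp (gg N y) := by
  rw [gg, Real.exp_sum, Zgff]
  apply Finset.prod_congr rfl
  intro p hp
  have hp' : p.1 < p.2 := mem_PP.mp hp
  have hpos : 0 < y p.2 - y p.1 := sub_pos.mpr (hy hp')
  rw [Real.rpow_def_of_pos hpos, exp_eq p.1 p.2 hp', mul_comm]

/-- logarithmic derivative -/
noncomputable def SS {n : ℕ} (x : Fin n → ℝ) (j : Fin n) (t : ℝ) : ℝ :=
  ∑ k ∈ univ.erase j, ee j k / (t - x k)

lemma sum_D_eq {n : ℕ} (x : Fin n → ℝ) (j : Fin n) (t : ℝ) :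
    ∑ p ∈ PP n, (if p.2 = j then ee p.1 p.2 / (t - x p.1)
      else if p.1 = j then ee p.1 p.2 / (t - x p.2) else 0) = SS x j t := by
  rw [SS]
  rw [← Finset.sum_filter_of_ne (p := fun p : Fin n × Fin n => p.1 = j ∨ p.2 = j)
    (fun p _ hne => by
      by_contra hc
      rcases not_or.mp hc with ⟨h1, h2⟩
      simp [h1, h2] at hne)]
  refine Finset.sum_nbij' (i := fun p : Fin n × Fin n => if p.2 = j then p.1 else p.2)
    (j := fun k : Fin n => if k < j then (k, j) else (j, k)) ?_ ?_ ?_ ?_ ?_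
  · intro p hp
    simp only [Finset.mem_filter, mem_PP] at hp
    obtain ⟨hlt, hor⟩ := hp
    by_cases h2 : p.2 = j
    · simp only [h2, if_true, Finset.mem_erase, Finset.mem_univ, and_true]
      exact ne_of_lt (h2 ▸ hlt)
    · have h1 : p.1 = j := hor.resolve_right h2
      simp only [h2, if_false, Finset.mem_erase, Finset.mem_univ, and_true]
      exact ne_of_gt (h1 ▸ hlt)
  · intro k hk
    have hkj : k ≠ j := (Finset.mem_erase.mp hk).1
    by_cases h : k < j
    · simp [h, mem_PP]
    · have hjk : j < k := lt_of_le_of_ne (not_lt.mp h) hkj.symm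
      simp [h, hjk, mem_PP]
  · intro p hp
    simp only [Finset.mem_filter, mem_PP] at hp
    obtain ⟨hlt, hor⟩ := hp
    by_cases h2 : p.2 = j
    · simp only [h2, if_true, h2 ▸ hlt, Prod.mk.injEq]
      exact Prod.ext rfl h2.symm
    · have h1 : p.1 = j := hor.resolve_right h2
      have : ¬ (p.2 < j) := by rw [← h1]; exact asymm hlt
      simp only [h2, if_false, this]
      exact Prod.ext h1.symm rfl
  · intro k hk
    have hkj : k ≠ j := (Finset.mem_erase.mp hk).1
    by_cases h : k < j
    · simp [h]
    · simp [h, hkj]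
  · intro p hp
    simp only [Finset.mem_filter, mem_PP] at hp
    obtain ⟨hlt, hor⟩ := hp
    by_cases h2 : p.2 = j
    · simp only [h2, if_true]
      rw [ee_symm]
    · have h1 : p.1 = j := hor.resolve_right h2
      simp only [h2, if_false, h1, if_true]

lemma hasDerivAt_gg (N : ℕ) (x : Fin (2*N) → ℝ) (j : Fin (2*N)) {t : ℝ}
    (ht : t ∈ UU x j) :
    HasDerivAt (fun s => gg N (Function.update x j s)) (SS x j t) t := by
  rw [← sum_D_eq x j t]
  apply HasDerivAt.fun_sum
  intro p hp
  have hlt : p.1 < p.2 := mem_PP.mp hp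
  by_cases h2 : p.2 = j
  · subst h2
    have h1 : p.1 ≠ p.2 := ne_of_lt hlt
    have hx1 : x p.1 < t := (mem_UU.mp ht p.1).1 hlt
    have hd : HasDerivAt (fun s : ℝ => ee p.1 p.2 * Real.log (s - x p.1))
        (ee p.1 p.2 * (1 / (t - x p.1))) t := by
      have := (((hasDerivAt_id t).sub_const (x p.1)).log
        (by intro h; rw [sub_eq_zero] at h; exact absurd h (ne_of_gt hx1))).const_mul
        (ee p.1 p.2)
      simpa using this
    simp only [if_pos rfl]
    rw [← mul_one_div]
    refine hd.congr_of_eventuallyEq (Filter.Eventually.of_forall fun s => ?_)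
    simp [Function.update_of_ne h1]
  · by_cases h1 : p.1 = j
    · subst h1
      have h2' : p.2 ≠ p.1 := fun h => h2 h
      have hx2 : t < x p.2 := (mem_UU.mp ht p.2).2 hlt
      have hd : HasDerivAt (fun s : ℝ => ee p.1 p.2 * Real.log (x p.2 - s))
          (ee p.1 p.2 * ((0 - 1) / (x p.2 - t))) t := by
        exact (((hasDerivAt_const t (x p.2)).sub (hasDerivAt_id t)).log
          (by simpa [sub_eq_zero] using (ne_of_gt hx2))).const_mul (ee p.1 p.2)
      simp only [if_neg h2, if_pos rfl]
      have heq : ee p.1 p.2 * ((0 - 1) / (x p.2 - t)) = ee p.1 p.2 / (t - x p.2) := by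
        rw [zero_sub, neg_div, ← div_neg, neg_sub, mul_one_div]
      rw [← heq]
      refine hd.congr_of_eventuallyEq (Filter.Eventually.of_forall fun s => ?_)
      simp [Function.update_of_ne h2']
    · simp only [if_neg h2, if_neg h1]
      have hd : HasDerivAt (fun _ : ℝ => ee p.1 p.2 * Real.log (x p.2 - x p.1)) 0 t :=
        hasDerivAt_const t _
      refine hd.congr_of_eventuallyEq (Filter.Eventually.of_forall fun s => ?_)
      simp [Function.update_of_ne h1, Function.update_of_ne h2]

lemma hasDerivAt_Zupdate (N : ℕ) (x : Fin (2*N) → ℝ) (hx : StrictMono x) (j : Fin (2*N))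
    {t : ℝ} (ht : t ∈ UU x j) :
    HasDerivAt (fun s => Zgff N (Function.update x j s))
      (Real.exp (gg N (Function.update x j t)) * SS x j t) t := by
  have h1 : HasDerivAt (fun s => Real.exp (gg N (Function.update x j s)))
      (Real.exp (gg N (Function.update x j t)) * SS x j t) t :=
    (hasDerivAt_gg N x j ht).exp
  refine h1.congr_of_eventuallyEq ?_
  filter_upwards [(isOpen_UU x j).mem_nhds ht] with s hs
  exact Zgff_eq_exp N _ (strictMono_update hx hs)

lemma hasDerivAt_SS (N : ℕ) (x : Fin (2*N) → ℝ) (j : Fin (2*N)) {t : ℝ}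
    (ht : t ∈ UU x j) :
    HasDerivAt (SS x j) (∑ k ∈ univ.erase j, -(ee j k) / (t - x k)^2) t := by
  apply HasDerivAt.fun_sum
  intro k hk
  have hkj : k ≠ j := (Finset.mem_erase.mp hk).1
  have hne : t - x k ≠ 0 := by
    rcases lt_or_gt_of_ne hkj with h | h
    · exact ne_of_gt (sub_pos.mpr ((mem_UU.mp ht k).1 h))
    · exact ne_of_lt (sub_neg.mpr ((mem_UU.mp ht k).2 h))
  have hd := (hasDerivAt_const t (ee j k)).fun_div ((hasDerivAt_id t).sub_const (x k)) hne
  simpa [neg_div] using hd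

lemma exp_gg_self (N : ℕ) (x : Fin (2*N) → ℝ) (hx : StrictMono x) (j : Fin (2*N)) :
    Real.exp (gg N (Function.update x j (x j))) = Zgff N x := by
  rw [Function.update_eq_self, (Zgff_eq_exp N x hx)]

lemma deriv_Zupdate (N : ℕ) (x : Fin (2*N) → ℝ) (hx : StrictMono x) (j : Fin (2*N)) :
    deriv (fun s => Zgff N (Function.update x j s)) (x j) = Zgff N x * SS x j (x j) := by
  have := (hasDerivAt_Zupdate N x hx j (mem_UU_self hx j)).deriv
  rw [this, exp_gg_self N x hx j]

lemma iteratedDeriv_two_Zupdate (N : ℕ) (x : Fin (2*N) → ℝ) (hx : StrictMono x)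
    (i : Fin (2*N)) :
    iteratedDeriv 2 (fun t => Zgff N (Function.update x i t)) (x i) =
      Zgff N x * (SS x i (x i) * SS x i (x i) +
        ∑ k ∈ univ.erase i, -(ee i k) / (x i - x k)^2) := by
  rw [iteratedDeriv_succ, iteratedDeriv_one]
  have hev : deriv (fun t => Zgff N (Function.update x i t)) =ᶠ[nhds (x i)]
      (fun t => Real.exp (gg N (Function.update x i t)) * SS x i t) := by
    filter_upwards [(isOpen_UU x i).mem_nhds (mem_UU_self hx i)] with s hs
    exact (hasDerivAt_Zupdate N x hx i hs).deriv
  rw [Filter.EventuallyEq.deriv_eq hev]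
  have hprod : HasDerivAt (fun t => Real.exp (gg N (Function.update x i t)) * SS x i t)
      ((Real.exp (gg N (Function.update x i (x i))) * SS x i (x i)) * SS x i (x i) +
        Real.exp (gg N (Function.update x i (x i))) *
          (∑ k ∈ univ.erase i, -(ee i k) / (x i - x k)^2)) (x i) :=
    ((hasDerivAt_gg N x i (mem_UU_self hx i)).exp).mul
      (hasDerivAt_SS N x i (mem_UU_self hx i))
  rw [hprod.deriv, exp_gg_self N x hx i]
  ring
lemma pt1 (E d : ℝ) (hd : d ≠ 0) (hE : E * E = 1/4) :
    2 * (E/d * (E/d)) + 2 * (-E / d^2) + ((2/(-d)) * (E/(-d)) - 1/(2*(-d)^2)) = 0 := by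
  field_simp
  linear_combination 4 * hE

lemma pt2 (E F G u v w : ℝ) (h1 : u - v ≠ 0) (h2 : u - w ≠ 0) (h3 : v - w ≠ 0)
    (h4 : v - u ≠ 0) (h5 : w - u ≠ 0) (h6 : w - v ≠ 0)
    (hef : E * F = (1/2) * G) :
    (2 * ((E/(u-v)) * (F/(u-w))) + (2/(v-u)) * (G/(v-w))) +
      (2 * ((F/(u-w)) * (E/(u-v))) + (2/(w-u)) * (G/(w-v))) = 0 := by
  have hG : G = 2 * (E * F) := by linarith
  rw [hG]
  field_simp
  ring

lemma antisym_sum {ι : Type*} [DecidableEq ι] {T : Finset ι} {F : ι → ι → ℝ}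
    (h : ∀ j ∈ T, ∀ k ∈ T, j ≠ k → F j k + F k j = 0) :
    ∑ j ∈ T, ∑ k ∈ T.erase j, F j k = 0 := by
  have hswap : ∑ j ∈ T, ∑ k ∈ T.erase j, F j k = ∑ j ∈ T, ∑ k ∈ T.erase j, F k j := by
    refine Finset.sum_comm' (fun a b => ?_)
    simp only [Finset.mem_erase]
    constructor
    · rintro ⟨ha, hb, hbT⟩; exact ⟨⟨fun e => hb e.symm, ha⟩, hbT⟩
    · rintro ⟨⟨hab, haT⟩, hbT⟩; exact ⟨haT, fun e => hab e.symm, hbT⟩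
  have h2 : (∑ j ∈ T, ∑ k ∈ T.erase j, F j k) + (∑ j ∈ T, ∑ k ∈ T.erase j, F k j) = 0 := by
    rw [← Finset.sum_add_distrib]
    refine Finset.sum_eq_zero fun j hj => ?_
    rw [← Finset.sum_add_distrib]
    refine Finset.sum_eq_zero fun k hk => ?_
    exact h j hj k (Finset.mem_erase.mp hk).2 (fun e => (Finset.mem_erase.mp hk).1 e.symm)
  linarith [hswap ▸ h2]

lemma bracket_zero {n : ℕ} (x : Fin n → ℝ) (hx : StrictMono x) (i : Fin n) :
    2 * (SS x i (x i) * SS x i (x i) + ∑ k ∈ univ.erase i, -(ee i k) / (x i - x k)^2) +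
      ∑ j ∈ univ.erase i, ((2 / (x j - x i)) * SS x j (x j) - 1 / (2 * (x j - x i)^2)) = 0 := by
  have hne : ∀ j k : Fin n, j ≠ k → x j - x k ≠ 0 := fun j k h =>
    sub_ne_zero.mpr (hx.injective.ne h)
  have hsq : SS x i (x i) * SS x i (x i) =
      ∑ j ∈ univ.erase i, ∑ k ∈ univ.erase i,
        (ee i j / (x i - x j)) * (ee i k / (x i - x k)) := by
    rw [SS]; exact Finset.sum_mul_sum _ _ _ _
  have hSSj : ∀ j ∈ (univ : Finset (Fin n)).erase i, SS x j (x j) =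
      ee j i / (x j - x i) +
        ∑ k ∈ ((univ : Finset (Fin n)).erase i).erase j, ee j k / (x j - x k) := by
    intro j hj
    have hji : j ≠ i := (Finset.mem_erase.mp hj).1
    rw [SS, ← Finset.add_sum_erase _ _ (Finset.mem_erase.mpr ⟨hji.symm, Finset.mem_univ i⟩),
      Finset.erase_right_comm]
  have main : 2 * (SS x i (x i) * SS x i (x i) +
        ∑ k ∈ univ.erase i, -(ee i k) / (x i - x k)^2) +
      ∑ j ∈ univ.erase i, ((2 / (x j - x i)) * SS x j (x j) - 1 / (2 * (x j - x i)^2)) =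
      ∑ j ∈ univ.erase i,
        ((2 * ((ee i j / (x i - x j)) * (ee i j / (x i - x j))) +
            2 * (-(ee i j) / (x i - x j)^2) +
          ((2 / (x j - x i)) * (ee j i / (x j - x i)) - 1 / (2 * (x j - x i)^2))) +
        ∑ k ∈ ((univ : Finset (Fin n)).erase i).erase j,
          (2 * ((ee i j / (x i - x j)) * (ee i k / (x i - x k))) +
            (2 / (x j - x i)) * (ee j k / (x j - x k)))) := by
    rw [hsq, mul_add, Finset.mul_sum, Finset.mul_sum, ← Finset.sum_add_distrib,
      ← Finset.sum_add_distrib]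
    refine Finset.sum_congr rfl fun j hj => ?_
    rw [hSSj j hj,
      ← Finset.add_sum_erase _ (fun k => (ee i j / (x i - x j)) * (ee i k / (x i - x k))) hj,
      Finset.sum_add_distrib]
    simp only [← Finset.mul_sum]
    ring
  rw [main, Finset.sum_add_distrib]
  have hz1 : ∑ j ∈ (univ : Finset (Fin n)).erase i,
      (2 * ((ee i j / (x i - x j)) * (ee i j / (x i - x j))) +
          2 * (-(ee i j) / (x i - x j)^2) +
        ((2 / (x j - x i)) * (ee j i / (x j - x i)) - 1 / (2 * (x j - x i)^2))) = 0 := by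
    refine Finset.sum_eq_zero fun j hj => ?_
    have hji : j ≠ i := (Finset.mem_erase.mp hj).1
    rw [ee_symm j i, show x j - x i = -(x i - x j) by ring]
    exact pt1 (ee i j) (x i - x j) (hne i j hji.symm) (ee_sq i j)
  have hz2 : ∑ j ∈ (univ : Finset (Fin n)).erase i,
      ∑ k ∈ ((univ : Finset (Fin n)).erase i).erase j,
        (2 * ((ee i j / (x i - x j)) * (ee i k / (x i - x k))) +
          (2 / (x j - x i)) * (ee j k / (x j - x k))) = 0 := by
    refine antisym_sum fun j hj k hk hjk => ?_
    have hji : j ≠ i := (Finset.mem_erase.mp hj).1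
    have hki : k ≠ i := (Finset.mem_erase.mp hk).1
    have h := pt2 (ee i j) (ee i k) (ee j k) (x i) (x j) (x k)
      (hne i j hji.symm) (hne i k hki.symm) (hne j k hjk)
      (hne j i hji) (hne k i hki) (hne k j hjk.symm) (ee_mul i j k)
    rw [ee_symm k j]
    linarith [h]
  rw [hz1, hz2, add_zero]

/-- On the chamber `x₁ < ⋯ < x_{2N}`, the GFF partition function satisfies
for each `i` the multiple SLE null-field PDE with `κ = 4`, `h = 1/4`:
`[2∂ᵢ² + ∑_{j≠i} ((2/(x_j-x_i))∂_j - 1/(2(x_j-x_i)²))] Z = 0`. -/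
theorem Zgff_nullfield (N : ℕ) (x : Fin (2 * N) → ℝ) (hx : StrictMono x)
    (i : Fin (2 * N)) :
    2 * iteratedDeriv 2 (fun t => Zgff N (Function.update x i t)) (x i) +
      ∑ j ∈ Finset.univ.erase i,
        ((2 / (x j - x i)) * deriv (fun t => Zgff N (Function.update x j t)) (x j) -
          (1 / (2 * (x j - x i) ^ 2)) * Zgff N x) = 0 := by
  rw [iteratedDeriv_two_Zupdate N x hx i]
  have hsum : ∑ j ∈ Finset.univ.erase i,
      ((2 / (x j - x i)) * deriv (fun t => Zgff N (Function.update x j t)) (x j) -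
        (1 / (2 * (x j - x i) ^ 2)) * Zgff N x) =
      ∑ j ∈ Finset.univ.erase i,
        ((2 / (x j - x i)) * (Zgff N x * SS x j (x j)) -
          (1 / (2 * (x j - x i) ^ 2)) * Zgff N x) :=
    Finset.sum_congr rfl fun j _ => by rw [deriv_Zupdate N x hx j]
  rw [hsum]
  have h1 : ∑ j ∈ Finset.univ.erase i,
      ((2 / (x j - x i)) * (Zgff N x * SS x j (x j)) -
        (1 / (2 * (x j - x i) ^ 2)) * Zgff N x) =
      Zgff N x * ∑ j ∈ Finset.univ.erase i,
        ((2 / (x j - x i)) * SS x j (x j) - 1 / (2 * (x j - x i) ^ 2)) := by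
    rw [Finset.mul_sum]
    exact Finset.sum_congr rfl fun j _ => by ring
  rw [h1]
  linear_combination (Zgff N x) * bracket_zero x hx i
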